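/- Let (Ω, F, P) be a probability space, p ≥ 1, (g_i) a martingale in L^p(Ω, F, P) and δ > 0. Then there exist an increasing sequence (F_i) of finite sub-σ-algebras of F and a martingale (f_i) adapted to (F_i) such that ‖g_i − f_i‖_{L^p} ≤ δ for every i ∈ ℕ. -/

import Mathlib

open MeasureTheory
open scoped ENNReal

section Aux

variable {Ω : Type*}

/-- A function with finite range is bounded in norm. -/
lemma aux_bound {f : Ω → ℝ} (h : (Set.range f).Finite) : ∃ C, ∀ x, ‖f x‖ ≤ C := by
  obtain ⟨C, hC⟩ := (h.image fun x => ‖x‖).bddAbove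
  exact ⟨C, fun x => hC ⟨f x, ⟨x, rfl⟩, rfl⟩⟩

lemma aux_memℒp {mΩ : MeasurableSpace Ω} {μ : Measure Ω} [IsFiniteMeasure μ] {f : Ω → ℝ}
    (hm : Measurable f) (h : (Set.range f).Finite) (p : ℝ≥0∞) : MemLp f p μ := by
  obtain ⟨C, hC⟩ := aux_bound h
  exact (memLp_top_of_bound hm.aestronglyMeasurable C (ae_of_all _ hC)).mono_exponent
    le_top

lemma aux_integrable {mΩ : MeasurableSpace Ω} {μ : Measure Ω} [IsFiniteMeasure μ] {f : Ω → ℝ}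
    (hm : Measurable f) (h : (Set.range f).Finite) : Integrable f μ :=
  (aux_memℒp hm h 1).integrable le_rfl

/-- Composition with an arbitrary function preserves measurability for finite-range functions. -/
lemma aux_comp_measurable {m : MeasurableSpace Ω} {f : Ω → ℝ} (hf : Measurable[m] f)
    (hfin : (Set.range f).Finite) (g : ℝ → ℝ) : Measurable[m] (fun ω => g (f ω)) := by
  intro A hA
  have h1 : (fun ω => g (f ω)) ⁻¹' A = f ⁻¹' (g ⁻¹' A) := rfl
  rw [h1, ← Set.preimage_inter_range,
    ← Set.biUnion_of_singleton (g ⁻¹' A ∩ Set.range f), Set.preimage_iUnion₂]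
  exact Set.Finite.measurableSet_biUnion (hfin.inter_of_right _)
    fun c _ => hf (measurableSet_singleton c)

/-- A measurable function w.r.t. a finite σ-algebra has finite range. -/
lemma aux_range_finite {m : MeasurableSpace Ω} (hfin : {s : Set Ω | MeasurableSet[m] s}.Finite)
    {f : Ω → ℝ} (hf : Measurable[m] f) : (Set.range f).Finite := by
  refine Set.Finite.of_finite_image (f := fun c => f ⁻¹' {c})
    (hfin.subset ?_) ?_
  · rintro A ⟨c, -, rfl⟩
    exact hf (measurableSet_singleton c)
  · rintro c₁ ⟨ω₁, rfl⟩ c₂ ⟨ω₂, rfl⟩ hA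
    simp only at hA
    have : ω₁ ∈ f ⁻¹' {f ω₂} := by rw [← hA]; exact rfl
    exact this

lemma aux_integral_mul {mΩ : MeasurableSpace Ω} (μ : Measure Ω) {f φ : Ω → ℝ}
    (hf : Integrable f μ) (hφm : Measurable φ) (hfin : (Set.range φ).Finite) :
    ∫ ω, f ω * φ ω ∂μ = ∑ c ∈ hfin.toFinset, c * ∫ ω in φ ⁻¹' {c}, f ω ∂μ := by
  have hrw : (fun ω => f ω * φ ω)
      = fun ω => ∑ c ∈ hfin.toFinset, Set.indicator (φ ⁻¹' {c}) (fun ω' => c * f ω') ω := by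
    funext ω
    rw [Finset.sum_eq_single_of_mem (φ ω) (hfin.mem_toFinset.mpr ⟨ω, rfl⟩)
      (f := fun c => Set.indicator (φ ⁻¹' {c}) (fun ω' => c * f ω') ω)]
    · rw [Set.indicator_of_mem (show ω ∈ φ ⁻¹' {φ ω} from rfl) (fun ω' => φ ω * f ω'),
        mul_comm]
    · intro b _ hb
      have hnm : ω ∉ φ ⁻¹' {b} := fun h => hb (Set.mem_singleton_iff.mp h).symm
      simp [Set.indicator_of_notMem hnm]
  rw [hrw, integral_finset_sum]
  · refine Finset.sum_congr rfl fun c _ => ?_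
    rw [integral_indicator (hφm (measurableSet_singleton c)), integral_const_mul]
  · intro c _
    exact (hf.const_mul c).indicator (hφm (measurableSet_singleton c))

lemma aux_condexp_mul {m mΩ : MeasurableSpace Ω} (hm : m ≤ mΩ) (μ : Measure Ω)
    [IsFiniteMeasure μ] {h φ : Ω → ℝ} (hh : Integrable h μ) (hφm : Measurable[m] φ)
    (hfin : (Set.range φ).Finite) :
    ∫ ω, (μ[h|m]) ω * φ ω ∂μ = ∫ ω, h ω * φ ω ∂μ := by
  haveI : SigmaFinite (μ.trim hm) := (isFiniteMeasure_trim hm).toSigmaFinite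
  rw [aux_integral_mul μ integrable_condExp (hφm.mono hm le_rfl) hfin,
    aux_integral_mul μ hh (hφm.mono hm le_rfl) hfin]
  exact Finset.sum_congr rfl fun c _ => by
    rw [setIntegral_condExp hm hh (hφm (measurableSet_singleton c))]

end Aux

/-- `L^p` contraction property of conditional expectation onto a finite σ-algebra. -/
lemma aux_contraction {Ω : Type*} {m mΩ : MeasurableSpace Ω}
    (hm : m ≤ mΩ) {P : Measure Ω} [IsProbabilityMeasure P] {p : ℝ≥0∞} (hp : 1 ≤ p)
    (hfin : {s : Set Ω | MeasurableSet[m] s}.Finite) {h : Ω → ℝ} (hh : MemLp h p P) :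
    eLpNorm (P[h|m]) p P ≤ eLpNorm h p P := by
  haveI : SigmaFinite (P.trim hm) := (isFiniteMeasure_trim hm).toSigmaFinite
  have hp0 : p ≠ 0 := fun h0 => by simp [h0] at hp
  have hhi : Integrable h P := hh.integrable hp
  by_cases hptop : p = ∞
  · subst hptop
    set C := (eLpNorm h ∞ P).toReal with hCdef
    have hC0 : 0 ≤ C := ENNReal.toReal_nonneg
    have hbd : ∀ᵐ ω ∂P, ‖h ω‖ ≤ C := by
      filter_upwards [ae_le_eLpNormEssSup (f := h) (μ := P)] with ω hω
      have h1 : ((‖h ω‖₊ : ℝ≥0∞)).toReal ≤ C := by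
        refine ENNReal.toReal_mono hh.2.ne ?_
        rwa [eLpNorm_exponent_top]
      simpa using h1
    have h1 : h ≤ᵐ[P] fun _ => C := hbd.mono fun ω hω => by
      rw [Real.norm_eq_abs] at hω; exact (le_abs_self _).trans hω
    have h2 : (fun _ => -C) ≤ᵐ[P] h := hbd.mono fun ω hω => by
      rw [Real.norm_eq_abs] at hω
      show -C ≤ h ω
      have := neg_abs_le (h ω); linarith
    have e1 : P[h|m] ≤ᵐ[P] fun _ => C := by
      have := condExp_mono (μ := P) (m := m) hhi (integrable_const C) h1
      rwa [condExp_const hm C] at this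
    have e2 : (fun _ => -C) ≤ᵐ[P] P[h|m] := by
      have := condExp_mono (μ := P) (m := m) (integrable_const (-C)) hhi h2
      rwa [condExp_const hm (-C)] at this
    have hbd2 : ∀ᵐ ω ∂P, ‖(P[h|m]) ω‖ ≤ C := by
      filter_upwards [e1, e2] with ω hω1 hω2
      rw [Real.norm_eq_abs, abs_le]; exact ⟨hω2, hω1⟩
    refine (eLpNorm_le_of_ae_bound hbd2).trans ?_
    rw [measure_univ, ENNReal.one_rpow, one_mul, hCdef, ENNReal.ofReal_toReal hh.2.ne]
  by_cases hp1 : p = 1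
  · subst hp1; exact eLpNorm_one_condExp_le_eLpNorm h
  -- main case `1 < p < ∞`
  have hp1' : 1 < p := lt_of_le_of_ne hp (Ne.symm hp1)
  set p' := p.toReal with hp'def
  have hp'1 : 1 < p' := by
    have := (ENNReal.toReal_lt_toReal (by norm_num) hptop).mpr hp1'
    simpa using this
  have hp'0 : 0 < p' := lt_trans one_pos hp'1
  set E := P[h|m] with hEdef
  have hEmeas : Measurable[m] E := stronglyMeasurable_condExp.measurable
  have hEfin : (Set.range E).Finite := aux_range_finite hfin hEmeas
  set gc : ℝ → ℝ := fun c => if c < 0 then -(|c| ^ (p' - 1)) else |c| ^ (p' - 1) with hgcdef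
  set φ : Ω → ℝ := fun ω => gc (E ω) with hφdef
  have hφm : Measurable[m] φ := aux_comp_measurable hEmeas hEfin gc
  have hφfin : (Set.range φ).Finite := (hEfin.image gc).subset
    (by rintro _ ⟨ω, rfl⟩; exact ⟨E ω, ⟨ω, rfl⟩, rfl⟩)
  have hφabs : ∀ ω, ‖φ ω‖ = |E ω| ^ (p' - 1) := by
    intro ω
    rw [hφdef, hgcdef, Real.norm_eq_abs]
    by_cases hE : E ω < 0 <;>
      simp [hE, abs_of_nonneg (Real.rpow_nonneg (abs_nonneg (E ω)) (p' - 1))]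
  have hEφ : ∀ ω, E ω * φ ω = |E ω| ^ p' := by
    intro ω
    by_cases h0 : E ω = 0
    · simp [hφdef, hgcdef, h0, Real.zero_rpow (ne_of_gt hp'0),
        Real.zero_rpow (show p' - 1 ≠ 0 by linarith)]
    · have habs : (0:ℝ) < |E ω| := abs_pos.mpr h0
      have key : |E ω| * |E ω| ^ (p' - 1) = |E ω| ^ p' := by
        rw [mul_comm, ← Real.rpow_add_one (ne_of_gt habs) (p' - 1), sub_add_cancel]
      by_cases hneg : E ω < 0
      · rw [hφdef, hgcdef]
        simp only [if_pos hneg]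
        rw [mul_neg, ← neg_mul]
        nth_rewrite 1 [show -E ω = |E ω| from (abs_of_neg hneg).symm]
        exact key
      · have hpos : 0 < E ω := lt_of_le_of_ne (not_lt.mp hneg) (Ne.symm h0)
        rw [hφdef, hgcdef]
        simp only [if_neg hneg]
        nth_rewrite 1 [show E ω = |E ω| from (abs_of_pos hpos).symm]
        exact key
  -- integrability facts
  have hEabs_meas : Measurable (fun ω => |E ω| ^ p') :=
    (aux_comp_measurable hEmeas hEfin (fun c => |c| ^ p')).mono hm le_rfl
  have hEabs_fin : (Set.range fun ω => |E ω| ^ p').Finite :=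
    (hEfin.image (fun c => |c| ^ p')).subset
      (by rintro _ ⟨ω, rfl⟩; exact ⟨E ω, ⟨ω, rfl⟩, rfl⟩)
  have hint1 : Integrable (fun ω => |E ω| ^ p') P := aux_integrable hEabs_meas hEabs_fin
  have hiden : ∫ ω, |E ω| ^ p' ∂P = ∫ ω, h ω * φ ω ∂P := by
    rw [show (fun ω => |E ω| ^ p') = fun ω => E ω * φ ω from funext fun ω => (hEφ ω).symm]
    exact aux_condexp_mul hm P hhi hφm hφfin
  set N := eLpNorm E p P with hNdef
  have hNtop : N ≠ ∞ := by
    obtain ⟨C, hC⟩ := aux_bound hEfin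
    refine ne_of_lt (lt_of_le_of_lt (eLpNorm_le_of_ae_bound (ae_of_all _ hC)) ?_)
    rw [measure_univ, ENNReal.one_rpow, one_mul]
    exact ENNReal.ofReal_lt_top
  by_cases hN0 : N = 0
  · rw [hN0]; exact zero_le
  have hNp : N ^ p' = ∫⁻ ω, (‖E ω‖₊ : ℝ≥0∞) ^ p' ∂P := by
    rw [hNdef, eLpNorm_eq_lintegral_rpow_enorm_toReal hp0 hptop, ← ENNReal.rpow_mul, one_div,
      inv_mul_cancel₀ (ne_of_gt hp'0), ENNReal.rpow_one]
    rfl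
  have hofReal : ENNReal.ofReal (∫ ω, |E ω| ^ p' ∂P) = ∫⁻ ω, (‖E ω‖₊ : ℝ≥0∞) ^ p' ∂P := by
    rw [ofReal_integral_eq_lintegral_ofReal hint1
      (ae_of_all _ fun ω => Real.rpow_nonneg (abs_nonneg _) _)]
    refine lintegral_congr fun ω => ?_
    rw [← enorm_eq_nnnorm, Real.enorm_eq_ofReal_abs, ENNReal.ofReal_rpow_of_nonneg (abs_nonneg _) hp'0.le]
  have hmul : Integrable (fun ω => h ω * φ ω) P := by
    obtain ⟨C, hC⟩ := aux_bound hφfin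
    have := hhi.bdd_mul (c := C)
      ((hφm.mono hm le_rfl).aestronglyMeasurable) (ae_of_all _ hC)
    simpa [mul_comm] using this
  have step1 : ENNReal.ofReal (∫ ω, h ω * φ ω ∂P) ≤ eLpNorm (fun ω => h ω * φ ω) 1 P := by
    have hint_le : ∫ ω, h ω * φ ω ∂P ≤ ∫ ω, ‖h ω * φ ω‖ ∂P := by
      refine le_trans (le_abs_self _) ?_
      rw [← Real.norm_eq_abs]
      exact norm_integral_le_integral_norm _
    calc ENNReal.ofReal (∫ ω, h ω * φ ω ∂P)
        ≤ ENNReal.ofReal (∫ ω, ‖h ω * φ ω‖ ∂P) := ENNReal.ofReal_le_ofReal hint_le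
      _ = eLpNorm (fun ω => h ω * φ ω) 1 P := by
          rw [ofReal_integral_norm_eq_lintegral_enorm hmul,
            eLpNorm_one_eq_lintegral_enorm]
  have hq'0 : 0 < p' / (p' - 1) := div_pos hp'0 (by linarith)
  set q : ℝ≥0∞ := ENNReal.ofReal (p' / (p' - 1)) with hqdef
  have hq0 : q ≠ 0 := by
    rw [hqdef]; exact (ENNReal.ofReal_pos.mpr hq'0).ne'
  have hpq : (1:ℝ≥0∞) / 1 = 1 / p + 1 / q := by
    have hpeq : p = ENNReal.ofReal p' := by rw [hp'def, ENNReal.ofReal_toReal hptop]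
    rw [hpeq, hqdef, one_div, one_div, one_div, ← ENNReal.ofReal_inv_of_pos hp'0,
      ← ENNReal.ofReal_inv_of_pos hq'0,
      ← ENNReal.ofReal_add (inv_nonneg.mpr hp'0.le) (inv_nonneg.mpr hq'0.le)]
    rw [inv_one]
    rw [show p'⁻¹ + (p' / (p' - 1))⁻¹ = 1 by field_simp; ring]
    simp
  have step2 : eLpNorm (fun ω => h ω * φ ω) 1 P ≤ eLpNorm h p P * eLpNorm φ q P :=
    by
    haveI : ENNReal.HolderTriple p q 1 := ⟨by simp only [← one_div]; exact hpq.symm⟩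
    exact (eLpNorm_le_eLpNorm_mul_eLpNorm_of_nnnorm hh.1
      ((hφm.mono hm le_rfl).aestronglyMeasurable) (· * ·) 1
      (ae_of_all _ fun ω => by rw [one_mul, nnnorm_mul])).trans_eq
      (by rw [ENNReal.coe_one, one_mul])
  have hφnorm : eLpNorm φ q P = N ^ (p' - 1) := by
    have hqtop : q ≠ ∞ := ENNReal.ofReal_ne_top
    rw [eLpNorm_eq_lintegral_rpow_enorm_toReal hq0 hqtop]
    have hqtoReal : q.toReal = p' / (p' - 1) := ENNReal.toReal_ofReal hq'0.le
    rw [hqtoReal]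
    have hpt : ∀ ω, (‖φ ω‖₊ : ℝ≥0∞) ^ (p' / (p' - 1)) = (‖E ω‖₊ : ℝ≥0∞) ^ p' := by
      intro ω
      rw [← enorm_eq_nnnorm, ← enorm_eq_nnnorm, Real.enorm_eq_ofReal_abs, Real.enorm_eq_ofReal_abs,
        show |φ ω| = |E ω| ^ (p' - 1) by rw [← Real.norm_eq_abs]; exact hφabs ω,
        ← ENNReal.ofReal_rpow_of_nonneg (abs_nonneg _)
          (le_of_lt (show (0:ℝ) < p' - 1 by linarith)),
        ← ENNReal.rpow_mul,
        show (p' - 1) * (p' / (p' - 1)) = p' by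
          rw [mul_comm, div_mul_cancel₀ _ (ne_of_gt (show (0:ℝ) < p' - 1 by linarith))]]
    simp_rw [enorm_eq_nnnorm, hpt]
    rw [← hNp, ← ENNReal.rpow_mul]
    congr 1
    rw [one_div]
    field_simp
  have final : N ^ p' ≤ eLpNorm h p P * N ^ (p' - 1) := by
    rw [hNp, ← hofReal, hiden]
    exact step1.trans (step2.trans_eq (by rw [hφnorm]))
  have hNsplit : N ^ p' = N * N ^ (p' - 1) := by
    have h1 : N ^ ((1:ℝ) + (p' - 1)) = N ^ (1:ℝ) * N ^ (p' - 1) :=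
      ENNReal.rpow_add _ _ hN0 hNtop
    rw [show (1:ℝ) + (p' - 1) = p' by ring] at h1
    rw [h1, ENNReal.rpow_one]
  rw [hNsplit] at final
  have hc0 : N ^ (p' - 1) ≠ 0 :=
    (ENNReal.rpow_pos (lt_of_le_of_ne zero_le (Ne.symm hN0)) hNtop).ne'
  have hctop : N ^ (p' - 1) ≠ ∞ := ENNReal.rpow_ne_top_of_nonneg (by linarith) hNtop
  exact (ENNReal.mul_le_mul_iff_left hc0 hctop).mp final

/-- Finite-range measurable approximation in `L^p` w.r.t. a sub-σ-algebra. -/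
lemma aux_approx {Ω : Type*} {m mΩ : MeasurableSpace Ω} (hm : m ≤ mΩ) (P : Measure Ω)
    [IsProbabilityMeasure P] {p : ℝ≥0∞} {g : Ω → ℝ} (hsm : StronglyMeasurable[m] g)
    (hgp : MemLp g p P) {ε : ℝ} (hε : 0 < ε) :
    ∃ s : Ω → ℝ, Measurable[m] s ∧ (Set.range s).Finite ∧
      eLpNorm (g - s) p P ≤ ENNReal.ofReal ε := by
  haveI : IsFiniteMeasure (P.trim hm) := isFiniteMeasure_trim hm
  by_cases hptop : p = ∞
  · -- bounded modification plus a grid approximation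
    subst hptop
    set C := (eLpNorm g ∞ P).toReal with hCdef
    have hC0 : 0 ≤ C := ENNReal.toReal_nonneg
    set g' : Ω → ℝ := fun ω => if |g ω| ≤ C then g ω else 0 with hg'def
    have hg'meas : Measurable[m] g' :=
      Measurable.ite (measurableSet_le (measurable_abs.comp hsm.measurable) measurable_const)
        hsm.measurable measurable_const
    have hg'bd : ∀ ω, |g' ω| ≤ C := by
      intro ω
      simp only [hg'def]
      split_ifs with hb
      · exact hb
      · simpa using hC0
    have hae : g =ᵐ[P] g' := by
      filter_upwards [ae_le_eLpNormEssSup (f := g) (μ := P)] with ω hω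
      have h1 : |g ω| ≤ C := by
        have h2 : ((‖g ω‖₊ : ℝ≥0∞)).toReal ≤ C := by
          refine ENNReal.toReal_mono hgp.2.ne ?_
          rwa [eLpNorm_exponent_top]
        simpa [Real.norm_eq_abs] using h2
      simp [hg'def, h1]
    obtain ⟨n, hn⟩ := exists_nat_gt (1 / ε)
    set ν : ℝ := (n : ℝ) + 1 with hνdef
    have hν0 : (0:ℝ) < ν := by positivity
    have hstep : 1 / ν ≤ ε := by
      have h1 : 1 / ε < ν := lt_trans hn (by rw [hνdef]; exact lt_add_one _)
      rw [div_le_iff₀ hν0]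
      rw [div_lt_iff₀ hε] at h1
      nlinarith
    set s : Ω → ℝ := fun ω => (⌈g' ω * ν⌉ : ℝ) / ν with hsdef
    have hsmeas : Measurable[m] s := by
      have h1 : Measurable[m] fun ω => ⌈g' ω * ν⌉ :=
        Int.measurable_ceil.comp (hg'meas.mul_const ν)
      exact ((measurable_from_top (f := fun k : ℤ => (k:ℝ))).comp h1).div_const ν
    have hsfin : (Set.range s).Finite := by
      refine ((Set.finite_Icc (⌈-(C * ν)⌉) ⌈C * ν⌉).image fun k : ℤ => (k:ℝ)/ν).subset ?_
      rintro _ ⟨ω, rfl⟩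
      refine ⟨⌈g' ω * ν⌉, ?_, rfl⟩
      have hb := hg'bd ω
      have h1 : -(C * ν) ≤ g' ω * ν := by nlinarith [abs_le.mp hb]
      have h2 : g' ω * ν ≤ C * ν := by nlinarith [abs_le.mp hb]
      exact Set.mem_Icc.mpr ⟨Int.ceil_le_ceil h1, Int.ceil_le_ceil h2⟩
    refine ⟨s, hsmeas, hsfin, ?_⟩
    have hdiff : ∀ ω, ‖g' ω - s ω‖ ≤ 1 / ν := by
      intro ω
      have h1 : g' ω * ν ≤ (⌈g' ω * ν⌉ : ℝ) := Int.le_ceil _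
      have h2 : (⌈g' ω * ν⌉ : ℝ) < g' ω * ν + 1 := Int.ceil_lt_add_one _
      have key1 : g' ω ≤ s ω := by
        rw [hsdef, le_div_iff₀ hν0]; exact h1
      have key2 : s ω ≤ g' ω + 1 / ν := by
        rw [hsdef, div_le_iff₀ hν0]
        have : (g' ω + 1 / ν) * ν = g' ω * ν + 1 := by field_simp
        rw [this]; exact h2.le
      rw [Real.norm_eq_abs, abs_sub_comm, abs_of_nonneg (by linarith)]
      linarith
    have hcong : g - s =ᵐ[P] g' - s := hae.sub (Filter.EventuallyEq.refl _ _)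
    rw [eLpNorm_congr_ae hcong]
    refine le_trans (eLpNorm_le_of_ae_bound (C := 1/ν) (ae_of_all _ hdiff)) ?_
    rw [measure_univ, ENNReal.one_rpow, one_mul]
    exact ENNReal.ofReal_le_ofReal hstep
  · -- use simple function density in `L^p`, `p ≠ ∞`, over the trimmed measure
    have hgp' : MemLp g p (P.trim hm) := by
      refine ⟨hsm.aestronglyMeasurable, ?_⟩
      rw [eLpNorm_trim hm hsm]
      exact hgp.2
    obtain ⟨s, hs, -⟩ :=
      @MeasureTheory.MemLp.exists_simpleFunc_eLpNorm_sub_lt Ω m p ℝ _ g (P.trim hm)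
        hgp' hptop (ENNReal.ofReal ε) (ne_of_gt (ENNReal.ofReal_pos.mpr hε))
    refine ⟨s, @SimpleFunc.measurable Ω ℝ m _ s, @SimpleFunc.finite_range Ω ℝ m s, ?_⟩
    rw [← eLpNorm_trim hm (hsm.sub (@SimpleFunc.stronglyMeasurable Ω ℝ m _ s))]
    exact hs.le

theorem stmt18 {Ω : Type*} {mΩ : MeasurableSpace Ω} (P : Measure Ω) [IsProbabilityMeasure P]
    {p : ℝ≥0∞} (hp : 1 ≤ p) (g : ℕ → Ω → ℝ) (B : Filtration ℕ mΩ)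
    (hg : Martingale g B P) (hgp : ∀ i, MemLp (g i) p P) {δ : ℝ} (hδ : 0 < δ) :
    ∃ F : Filtration ℕ mΩ, (∀ i, {s : Set Ω | MeasurableSet[F i] s}.Finite) ∧
      ∃ f : ℕ → Ω → ℝ, Martingale f F P ∧
        ∀ i, eLpNorm (g i - f i) p P ≤ ENNReal.ofReal δ := by
  have hδ2 : 0 < δ / 2 := half_pos hδ
  -- finite-range approximations of each `g i`, measurable w.r.t. `B i`
  have happrox : ∀ i, ∃ s : Ω → ℝ, Measurable[B i] s ∧ (Set.range s).Finite ∧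
      eLpNorm (g i - s) p P ≤ ENNReal.ofReal (δ / 2) :=
    fun i => aux_approx (B.le i) P (hg.stronglyAdapted i) (hgp i) hδ2
  choose s hs1 hs2 hs3 using happrox
  -- the finite filtration generated by the approximations
  set t : ℕ → Ω → (ℕ → ℝ) := fun i ω j => if j < i + 1 then s j ω else 0 with htdef
  have htfin : ∀ i, (Set.range (t i)).Finite := by
    intro i
    have hsub : Set.range (t i) ⊆
        (fun u : Fin (i+1) → ℝ => fun j : ℕ => if h : j < i + 1 then u ⟨j, h⟩ else 0) ''
          (Set.univ.pi fun j : Fin (i+1) => Set.range (s j)) := by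
      rintro _ ⟨ω, rfl⟩
      refine ⟨fun j => s j ω, fun j _ => ⟨ω, rfl⟩, ?_⟩
      funext j
      by_cases hj : j < i + 1 <;> simp only [htdef, hj, ↓reduceIte, ↓reduceDIte]
    exact (((Set.Finite.pi fun j : Fin (i+1) => hs2 j.1).image _).subset hsub)
  set F0 : ℕ → MeasurableSpace Ω := fun i => MeasurableSpace.comap (t i) ⊤ with hF0def
  have hF0mono : Monotone F0 := by
    refine monotone_nat_of_le_succ fun i => ?_
    have hcomp : t i = (fun v : ℕ → ℝ => fun j => if j < i + 1 then v j else 0) ∘ t (i+1) := by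
      funext ω
      funext j
      by_cases hj : j < i + 1
      · simp only [htdef, Function.comp_apply, hj, (by omega : j < i + 1 + 1), ↓reduceIte]
      · simp only [htdef, Function.comp_apply, hj, ↓reduceIte]
    rw [hF0def]
    simp only
    rw [hcomp, ← MeasurableSpace.comap_comp]
    exact MeasurableSpace.comap_mono le_top
  have hfiber : ∀ i (y : ℕ → ℝ), MeasurableSet[B i] (t i ⁻¹' {y}) := by
    intro i y
    by_cases hy : ∀ j, i + 1 ≤ j → y j = 0
    · have heq : t i ⁻¹' {y} = ⋂ j ∈ Finset.range (i+1), s j ⁻¹' {y j} := by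
        ext ω
        simp only [Set.mem_preimage, Set.mem_singleton_iff, funext_iff, Set.mem_iInter,
          Finset.mem_range]
        constructor
        · intro hall j hj
          have h := hall j
          simp only [htdef] at h
          rwa [if_pos hj] at h
        · intro hall j
          simp only [htdef]
          by_cases hj : j < i + 1
          · rw [if_pos hj]; exact hall j hj
          · rw [if_neg hj]; exact (hy j (not_lt.mp hj)).symm
      rw [heq]
      refine MeasurableSet.iInter fun j => MeasurableSet.iInter fun hj => ?_
      have hmeas : MeasurableSet[B j] (s j ⁻¹' {y j}) :=
        (hs1 j) (measurableSet_singleton (y j))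
      exact (B.mono (Nat.lt_succ_iff.mp (Finset.mem_range.mp hj))) _ hmeas
    · have heq : t i ⁻¹' {y} = ∅ := by
        push_neg at hy
        obtain ⟨j, hj1, hj2⟩ := hy
        ext ω
        simp only [Set.mem_preimage, Set.mem_singleton_iff, Set.mem_empty_iff_false,
          iff_false]
        intro hc
        apply hj2
        have h := congrFun hc j
        simp only [htdef] at h
        rw [← h, if_neg (not_lt.mpr hj1)]
      rw [heq]
      exact @MeasurableSet.empty Ω (B i)
  have hF0leB : ∀ i, F0 i ≤ B i := by
    intro i A hA
    obtain ⟨A', -, rfl⟩ := hA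
    rw [← Set.preimage_inter_range, ← Set.biUnion_of_singleton (A' ∩ Set.range (t i)),
      Set.preimage_iUnion₂]
    exact Set.Finite.measurableSet_biUnion ((htfin i).inter_of_right A')
      fun y _ => hfiber i y
  set F : Filtration ℕ mΩ := ⟨F0, hF0mono, fun i => (hF0leB i).trans (B.le i)⟩ with hFdef
  have hFeq : ∀ i, F i = F0 i := fun i => rfl
  have hFfin : ∀ i, {A : Set Ω | MeasurableSet[F i] A}.Finite := by
    intro i
    refine ((htfin i).finite_subsets.image (fun A => t i ⁻¹' A)).subset ?_
    rintro A hA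
    obtain ⟨A', -, rfl⟩ := hA
    exact ⟨A' ∩ Set.range (t i), Set.inter_subset_right, Set.preimage_inter_range⟩
  have hsF : ∀ i j, j ≤ i → StronglyMeasurable[F i] (s j) := by
    intro i j hj
    have hcomp : s j = (fun v : ℕ → ℝ => v j) ∘ t i := by
      funext ω
      simp only [htdef, Function.comp_apply, (by omega : j < i + 1), ↓reduceIte]
    have hti : @Measurable Ω (ℕ → ℝ) (F0 i) ⊤ (t i) :=
      measurable_iff_comap_le.mpr le_rfl
    have hev : @Measurable (ℕ → ℝ) ℝ ⊤ _ (fun v => v j) := measurable_from_top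
    rw [hcomp]
    exact (hev.comp hti).stronglyMeasurable
  -- the approximating martingale
  set f : ℕ → Ω → ℝ := fun i => P[g i | F i] with hfdef
  have hsint : ∀ i, Integrable (s i) P :=
    fun i => aux_integrable ((hs1 i).mono (B.le i) le_rfl) (hs2 i)
  have hmart : Martingale f F P := by
    constructor
    · exact fun i => stronglyMeasurable_condExp
    · intro i j hij
      have h1 : P[f j | F i] =ᵐ[P] P[g j | F i] := condExp_condExp_of_le (F.mono hij) (F.le j)
      have h2 : P[g j | F i] =ᵐ[P] P[P[g j | B i] | F i] :=
        (condExp_condExp_of_le (hF0leB i) (B.le i)).symm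
      have h3 : P[P[g j | B i] | F i] =ᵐ[P] P[g i | F i] :=
        condExp_congr_ae (hg.condExp_ae_eq hij)
      exact (h1.trans h2).trans h3
  refine ⟨F, hFfin, f, hmart, fun i => ?_⟩
  have hkey : eLpNorm (s i - f i) p P ≤ ENNReal.ofReal (δ / 2) := by
    have hcond : P[s i | F i] = s i :=
      condExp_of_stronglyMeasurable (F.le i) (hsF i i le_rfl) (hsint i)
    have h1 : P[s i - g i | F i] =ᵐ[P] s i - f i := by
      refine (condExp_sub (hsint i) ((hgp i).integrable hp) _).trans ?_
      rw [hcond]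
    rw [eLpNorm_congr_ae h1.symm]
    refine le_trans (aux_contraction (F.le i) hp (hFfin i)
      ((aux_memℒp ((hs1 i).mono (B.le i) le_rfl) (hs2 i) p).sub (hgp i))) ?_
    have hswap : eLpNorm (s i - g i) p P = eLpNorm (g i - s i) p P := by
      rw [← eLpNorm_neg, neg_sub]
    rw [hswap]
    exact hs3 i
  have hsplit : g i - f i = (g i - s i) + (s i - f i) := by
    rw [sub_add_sub_cancel]
  calc eLpNorm (g i - f i) p P
      = eLpNorm ((g i - s i) + (s i - f i)) p P := by rw [hsplit]
    _ ≤ eLpNorm (g i - s i) p P + eLpNorm (s i - f i) p P := by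
        refine eLpNorm_add_le ?_ ?_ hp
        · exact (hgp i).1.sub ((hs1 i).mono (B.le i) le_rfl).aestronglyMeasurable
        · exact (((hs1 i).mono (B.le i) le_rfl).aestronglyMeasurable).sub
            (stronglyMeasurable_condExp.mono (F.le i)).aestronglyMeasurable
    _ ≤ ENNReal.ofReal (δ / 2) + ENNReal.ofReal (δ / 2) := add_le_add (hs3 i) hkey
    _ = ENNReal.ofReal δ := by
        rw [← ENNReal.ofReal_add hδ2.le hδ2.le, add_halves]
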